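/- Fix d ≥ 2 and p = (p₁,…,p_d) ∈ (0,1)^d. Let I be a {0,1}^d-valued random vector with P(I_m = 1) = p_m, let U₀, U₁ be vectors of i.i.d. standard uniform random variables on [0,1], with I, U₀, U₁ mutually independent, and set U_m = U₀,ₘ^{1-p_m}·U₁,ₘ^{I_m}. Then E[ Π_{m=1}^d U_m ] = 2^{-d} · ( Π_{m=1}^d 1/(2-p_m) ) · E[ Π_{m=1}^d (2 - I_m) ]. Consequently, Spearman's rho derived from average upper orthant dependence equals ρ^{cU} = ((d+1)/(2^d - d - 1))·( ( Π_{m=1}^d 1/(2-p_m) )·E[ Π_{m=1}^d (2 - I_m) ] - 1 ). -/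

import Mathlib

open MeasureTheory ProbabilityTheory Set

/-- The real value (`0` or `1`) of a Bernoulli outcome. -/
noncomputable def bval (b : Bool) : ℝ := if b then 1 else 0

lemma bval_nonneg (b : Bool) : 0 ≤ bval b := by unfold bval; split <;> norm_num

section aux
variable {Ω : Type*} [MeasurableSpace Ω] {P : Measure Ω} [IsProbabilityMeasure P]

omit [IsProbabilityMeasure P] in
lemma unif_moment {X : Ω → ℝ} (hX : Measurable X)
    (hlaw : P.map X = volume.restrict (Icc (0:ℝ) 1)) {a : ℝ} (ha : 0 ≤ a) :
    ∫ ω, X ω ^ a ∂P = (a + 1)⁻¹ := by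
  have hm : Measurable fun x : ℝ => x ^ a := (Real.continuous_rpow_const ha).measurable
  rw [← integral_map hX.aemeasurable hm.aestronglyMeasurable, hlaw,
    integral_Icc_eq_integral_Ioc, ← intervalIntegral.integral_of_le (zero_le_one),
    integral_rpow (Or.inl (by linarith)), Real.one_rpow,
    Real.zero_rpow (by linarith)]
  norm_num

omit [IsProbabilityMeasure P] in
lemma ae_mem_Icc {X : Ω → ℝ} (hX : Measurable X)
    (hlaw : P.map X = volume.restrict (Icc (0:ℝ) 1)) :
    ∀ᵐ ω ∂P, X ω ∈ Icc (0:ℝ) 1 := by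
  have h0 : P.map X (Icc (0:ℝ) 1)ᶜ = 0 := by
    rw [hlaw, Measure.restrict_apply measurableSet_Icc.compl]
    simp
  rw [Measure.map_apply hX measurableSet_Icc.compl] at h0
  exact ae_iff.mpr h0

lemma integral_prod_of_iIndep {ι : Type*} {f : ι → Ω → ℝ}
    (hindep : iIndepFun (m := fun _ => (inferInstance : MeasurableSpace ℝ)) f P)
    (hmeas : ∀ i, Measurable (f i)) (s : Finset ι) :
    ∫ ω, ∏ i ∈ s, f i ω ∂P = ∏ i ∈ s, ∫ ω, f i ω ∂P := by
  classical
  induction s using Finset.cons_induction with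
  | empty => simp
  | cons i s hi ih =>
    simp only [Finset.prod_cons]
    have hfun : (∏ j ∈ s, f j) = fun a => ∏ j ∈ s, f j a := funext fun a => Finset.prod_apply a s f
    have hprodmeas : Measurable (∏ j ∈ s, f j) := by
      rw [hfun]; exact Finset.measurable_prod s fun j _ => hmeas j
    have hind : IndepFun (f i) (∏ j ∈ s, f j) P :=
      (hindep.indepFun_finset_prod_of_notMem hmeas hi).symm
    have h2 := hind.integral_mul_eq_mul_integral (hmeas i).aestronglyMeasurable hprodmeas.aestronglyMeasurable
    simp only [Finset.prod_apply, Pi.mul_apply] at h2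
    rw [h2, ih]

end aux


/-- Fix `d ≥ 2` and `p ∈ (0,1)^d`.  For the GFGM representation
`U_m = U₀ₘ^(1-p_m) * U₁ₘ^(I_m)`, one has
`E[Π_m U_m] = 2^{-d} (Π_m 1/(2-p_m)) E[Π_m (2 - I_m)]`, and consequently Spearman's rho
from average upper orthant dependence equals
`ρ^{cU} = ((d+1)/(2^d-d-1)) ((Π_m 1/(2-p_m)) E[Π_m (2 - I_m)] - 1)`. -/
theorem gfgm_rho_cU
    {Ω : Type*} [MeasurableSpace Ω] (P : Measure Ω) [IsProbabilityMeasure P]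
    (d : ℕ) (hd : 2 ≤ d) (p : Fin d → ℝ) (hp : ∀ m, p m ∈ Ioo (0 : ℝ) 1)
    (I : Ω → Fin d → Bool) (U₀ U₁ : Fin d → Ω → ℝ)
    (hI : Measurable I) (hU₀ : ∀ m, Measurable (U₀ m)) (hU₁ : ∀ m, Measurable (U₁ m))
    (hU₀law : ∀ m, P.map (U₀ m) = volume.restrict (Icc (0 : ℝ) 1))
    (hU₁law : ∀ m, P.map (U₁ m) = volume.restrict (Icc (0 : ℝ) 1))
    (hImarg : ∀ m, P {ω | I ω m = true} = ENNReal.ofReal (p m))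
    (hiid : iIndepFun (m := fun _ : Fin d ⊕ Fin d => (inferInstance : MeasurableSpace ℝ))
      (Sum.elim U₀ U₁) P)
    (hIU : IndepFun I (fun ω j => Sum.elim U₀ U₁ j ω) P) :
    (∫ ω, ∏ m, (U₀ m ω ^ (1 - p m) * U₁ m ω ^ bval (I ω m)) ∂P)
      = ((2 : ℝ) ^ d)⁻¹ * (∏ m, (2 - p m)⁻¹) * ∫ ω, ∏ m, (2 - bval (I ω m)) ∂P
    ∧ ((d : ℝ) + 1) / (2 ^ d - d - 1) *
        ((2 : ℝ) ^ d * (∫ ω, ∏ m, (U₀ m ω ^ (1 - p m) * U₁ m ω ^ bval (I ω m)) ∂P) - 1)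
      = ((d : ℝ) + 1) / (2 ^ d - d - 1) *
          ((∏ m, (2 - p m)⁻¹) * (∫ ω, ∏ m, (2 - bval (I ω m)) ∂P) - 1) := by
  classical
  set Y : Ω → (Fin d ⊕ Fin d) → ℝ := fun ω j => Sum.elim U₀ U₁ j ω with hY
  have hYmeas : Measurable Y :=
    measurable_pi_lambda _ (fun j => by rcases j with m | m; exacts [hU₀ m, hU₁ m])
  have hae : ∀ᵐ ω ∂P, (∀ m, U₀ m ω ∈ Icc (0:ℝ) 1) ∧ ∀ m, U₁ m ω ∈ Icc (0:ℝ) 1 :=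
    (ae_all_iff.mpr fun m => ae_mem_Icc (hU₀ m) (hU₀law m)).and
      (ae_all_iff.mpr fun m => ae_mem_Icc (hU₁ m) (hU₁law m))
  have hIset : ∀ b : Fin d → Bool, MeasurableSet {ω | I ω = b} :=
    fun b => hI (measurableSet_singleton b)
  have hindint : ∀ b : Fin d → Bool,
      ∫ ω, (if I ω = b then (1:ℝ) else 0) ∂P = (P {ω | I ω = b}).toReal := by
    intro b
    have h : (fun ω => if I ω = b then (1:ℝ) else 0) = {ω | I ω = b}.indicator 1 := by
      funext ω; simp [Set.indicator_apply]
    rw [h, integral_indicator_one (hIset b)]; rfl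
  set F : (Fin d → Bool) → Ω → ℝ :=
    fun b ω => ∏ m, (U₀ m ω ^ (1 - p m) * U₁ m ω ^ bval (b m)) with hF
  have hFmeas : ∀ b, Measurable (F b) := fun b =>
    Finset.measurable_prod _ fun m _ =>
      (((Real.continuous_rpow_const (by have := (hp m).2; linarith)).measurable.comp
        (hU₀ m)).mul
        ((Real.continuous_rpow_const (bval_nonneg _)).measurable.comp (hU₁ m)))
  have hFbound : ∀ b, ∀ᵐ ω ∂P, F b ω ∈ Icc (0:ℝ) 1 := by
    intro b
    filter_upwards [hae] with ω hω
    have hnn : ∀ m : Fin d, 0 ≤ U₀ m ω ^ (1 - p m) * U₁ m ω ^ bval (b m) := fun m =>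
      mul_nonneg (Real.rpow_nonneg (hω.1 m).1 _) (Real.rpow_nonneg (hω.2 m).1 _)
    constructor
    · exact Finset.prod_nonneg fun m _ => hnn m
    · refine Finset.prod_le_one (fun m _ => hnn m) fun m _ => ?_
      have h1 : U₀ m ω ^ (1 - p m) ≤ 1 :=
        Real.rpow_le_one (hω.1 m).1 (hω.1 m).2 (by have := (hp m).2; linarith)
      have h2 : U₁ m ω ^ bval (b m) ≤ 1 :=
        Real.rpow_le_one (hω.2 m).1 (hω.2 m).2 (bval_nonneg _)
      have h3 : 0 ≤ U₁ m ω ^ bval (b m) := Real.rpow_nonneg (hω.2 m).1 _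
      nlinarith [Real.rpow_nonneg (hω.1 m).1 (1 - p m)]
  have hindmeas : ∀ b : Fin d → Bool,
      Measurable (fun ω => if I ω = b then (1:ℝ) else 0) :=
    fun b => (measurable_of_countable (fun i : Fin d → Bool => if i = b then (1:ℝ) else 0)).comp hI
  have hint : ∀ b, Integrable (fun ω => (if I ω = b then (1:ℝ) else 0) * F b ω) P := by
    intro b
    refine Integrable.mono' (integrable_const (1:ℝ)) ((hindmeas b).mul (hFmeas b)).aestronglyMeasurable ?_
    filter_upwards [hFbound b] with ω hω
    rw [Real.norm_eq_abs, abs_mul]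
    have h1 : |F b ω| ≤ 1 := abs_le.mpr ⟨by linarith [hω.1], hω.2⟩
    have h2 : |if I ω = b then (1:ℝ) else 0| ≤ 1 := by split <;> norm_num
    calc |if I ω = b then (1:ℝ) else 0| * |F b ω| ≤ 1 * 1 :=
          mul_le_mul h2 h1 (abs_nonneg _) zero_le_one
      _ = 1 := by norm_num
  -- key identity for each b
  have key : ∀ b : Fin d → Bool, ∫ ω, (if I ω = b then (1:ℝ) else 0) * F b ω ∂P
      = (P {ω | I ω = b}).toReal *
        ((∏ m, (2 - p m)⁻¹) * ∏ m, (bval (b m) + 1)⁻¹) := by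
    intro b
    set e : Fin d ⊕ Fin d → ℝ := Sum.elim (fun m => 1 - p m) (fun m => bval (b m)) with he
    have he0 : ∀ j, 0 ≤ e j := by
      rintro (m | m)
      · simp only [he, Sum.elim_inl]; have := (hp m).2; linarith
      · exact bval_nonneg _
    set G : ((Fin d ⊕ Fin d) → ℝ) → ℝ := fun v => ∏ j, v j ^ e j with hG
    have hGmeas : Measurable G := Finset.measurable_prod _ fun j _ =>
      (Real.continuous_rpow_const (he0 j)).measurable.comp (measurable_pi_apply j)
    have hφ : Measurable (fun i : Fin d → Bool => if i = b then (1:ℝ) else 0) :=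
      measurable_of_countable _
    have hcomp := (hIU.comp hφ hGmeas).integral_mul_eq_mul_integral
      (hφ.comp hI).aestronglyMeasurable (hGmeas.comp hYmeas).aestronglyMeasurable
    simp only [Function.comp_def] at hcomp
    have hGY : ∀ ω, G (Y ω) = F b ω := by
      intro ω
      simp only [hG, hF, hY]
      rw [Fintype.prod_sum_type, ← Finset.prod_mul_distrib]
      simp [he]
    have hGint : ∫ ω, G (Y ω) ∂P
        = (∏ m, (2 - p m)⁻¹) * ∏ m, (bval (b m) + 1)⁻¹ := by
      have hiid2 : iIndepFun (m := fun _ : Fin d ⊕ Fin d => (inferInstance : MeasurableSpace ℝ))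
          (fun j => (fun x : ℝ => x ^ e j) ∘ Sum.elim U₀ U₁ j) P :=
        hiid.comp (fun j => fun x : ℝ => x ^ e j)
          (fun j => (Real.continuous_rpow_const (he0 j)).measurable)
      have hmeas2 : ∀ j, Measurable ((fun x : ℝ => x ^ e j) ∘ Sum.elim U₀ U₁ j) := by
        rintro (m | m)
        · exact (Real.continuous_rpow_const (he0 _)).measurable.comp (hU₀ m)
        · exact (Real.continuous_rpow_const (he0 _)).measurable.comp (hU₁ m)
      have h1 := integral_prod_of_iIndep hiid2 hmeas2 Finset.univ
      have h2 : (∫ ω, G (Y ω) ∂P)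
          = ∫ ω, ∏ j, ((fun x : ℝ => x ^ e j) ∘ Sum.elim U₀ U₁ j) ω ∂P := rfl
      rw [h2, h1, Fintype.prod_sum_type]
      congr 1
      · refine Finset.prod_congr rfl fun m _ => ?_
        have := unif_moment (P := P) (hU₀ m) (hU₀law m)
          (a := 1 - p m) (by have := (hp m).2; linarith)
        simp only [Function.comp_def, Sum.elim_inl, he] at *
        rw [this]
        norm_num
        ring_nf
      · refine Finset.prod_congr rfl fun m _ => ?_
        have := unif_moment (P := P) (hU₁ m) (hU₁law m)
          (a := bval (b m)) (bval_nonneg _)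
        simp only [Function.comp_def, Sum.elim_inr, he] at *
        rw [this]
    calc ∫ ω, (if I ω = b then (1:ℝ) else 0) * F b ω ∂P
        = ∫ ω, (if I ω = b then (1:ℝ) else 0) * G (Y ω) ∂P := by
          refine integral_congr_ae (Filter.Eventually.of_forall fun ω => ?_)
          simp only [hGY]
      _ = (∫ ω, (if I ω = b then (1:ℝ) else 0) ∂P) * ∫ ω, G (Y ω) ∂P := hcomp
      _ = (P {ω | I ω = b}).toReal *
            ((∏ m, (2 - p m)⁻¹) * ∏ m, (bval (b m) + 1)⁻¹) := by
          rw [hindint b, hGint]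
  -- LHS decomposition
  have hL : (∫ ω, ∏ m, (U₀ m ω ^ (1 - p m) * U₁ m ω ^ bval (I ω m)) ∂P)
      = ∑ b : Fin d → Bool, (P {ω | I ω = b}).toReal *
          ((∏ m, (2 - p m)⁻¹) * ∏ m, (bval (b m) + 1)⁻¹) := by
    have hsplit : ∀ ω, ∏ m, (U₀ m ω ^ (1 - p m) * U₁ m ω ^ bval (I ω m))
        = ∑ b : Fin d → Bool, (if I ω = b then (1:ℝ) else 0) * F b ω := by
      intro ω
      symm
      have h : ∀ b : Fin d → Bool,
          (if I ω = b then (1:ℝ) else 0) * F b ω = if I ω = b then F b ω else 0 :=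
        fun b => by split <;> simp
      simp_rw [h]
      rw [Finset.sum_ite_eq]
      simp [hF]
    simp_rw [hsplit]
    rw [integral_finset_sum _ (fun b _ => hint b)]
    exact Finset.sum_congr rfl fun b _ => key b
  -- RHS decomposition
  have hR : (∫ ω, ∏ m, (2 - bval (I ω m)) ∂P)
      = ∑ b : Fin d → Bool, (P {ω | I ω = b}).toReal * ∏ m, (2 - bval (b m)) := by
    have hsplit2 : ∀ ω, ∏ m, (2 - bval (I ω m))
        = ∑ b : Fin d → Bool, (if I ω = b then (1:ℝ) else 0) * ∏ m, (2 - bval (b m)) := by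
      intro ω
      symm
      have h : ∀ b : Fin d → Bool,
          (if I ω = b then (1:ℝ) else 0) * ∏ m, (2 - bval (b m))
            = if I ω = b then (∏ m, (2 - bval (b m))) else 0 :=
        fun b => by split <;> simp
      simp_rw [h]
      rw [Finset.sum_ite_eq]
      simp
    simp_rw [hsplit2]
    rw [integral_finset_sum]
    · refine Finset.sum_congr rfl fun b _ => ?_
      rw [integral_mul_const, hindint b]
    · intro b _
      have h : (fun ω => (if I ω = b then (1:ℝ) else 0) * ∏ m, (2 - bval (b m)))
          = {ω | I ω = b}.indicator (fun _ => ∏ m, (2 - bval (b m))) := by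
        funext ω; by_cases hc : I ω = b <;> simp [Set.indicator_apply, hc]
      rw [h]
      exact (integrable_const _).indicator (hIset b)
  have hprodbval : ∀ b : Fin d → Bool,
      (∏ m, (bval (b m) + 1)⁻¹) = ((2:ℝ)^d)⁻¹ * ∏ m, (2 - bval (b m)) := by
    intro b
    have h : ∀ m : Fin d, (bval (b m) + 1)⁻¹ = (2 - bval (b m)) * (2:ℝ)⁻¹ := fun m => by
      unfold bval; cases b m <;> norm_num
    simp_rw [h]
    rw [Finset.prod_mul_distrib, Finset.prod_const]
    simp [Finset.card_univ, inv_pow, mul_comm]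
  have h1 : (∫ ω, ∏ m, (U₀ m ω ^ (1 - p m) * U₁ m ω ^ bval (I ω m)) ∂P)
      = ((2 : ℝ) ^ d)⁻¹ * (∏ m, (2 - p m)⁻¹) * ∫ ω, ∏ m, (2 - bval (I ω m)) ∂P := by
    rw [hL, hR, Finset.mul_sum]
    refine Finset.sum_congr rfl fun b _ => ?_
    rw [hprodbval b]
    ring
  refine ⟨h1, ?_⟩
  rw [h1]
  congr 2
  have h2 : ((2:ℝ)^d) ≠ 0 := by positivity
  have h3 : (2:ℝ)^d * (((2:ℝ)^d)⁻¹ * (∏ m, (2 - p m)⁻¹) * ∫ ω, ∏ m, (2 - bval (I ω m)) ∂P)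
      = ((2:ℝ)^d * ((2:ℝ)^d)⁻¹) * ((∏ m, (2 - p m)⁻¹) * ∫ ω, ∏ m, (2 - bval (I ω m)) ∂P) := by
    ring
  rw [h3, mul_inv_cancel₀ h2, one_mul]
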